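/- For density operators ρ and σ on a finite-dimensional Hilbert space, the Fuchs–van de Graaf upper bound holds: ‖ρ − σ‖₁ ≤ 2√(1 − F(ρ,σ)²), where F is the fidelity. -/

import Mathlib

open scoped ComplexOrder

/-- The square root of a positive semidefinite matrix, as defined in the older Mathlib
(`Matrix.PosSemidef.sqrt`, removed since). -/
noncomputable def Matrix.PosSemidef.sqrt {n 𝕜 : Type*} [Fintype n] [RCLike 𝕜] [DecidableEq n]
    {A : Matrix n n 𝕜} (hA : A.PosSemidef) : Matrix n n 𝕜 :=
  (hA.1.eigenvectorUnitary : Matrix n n 𝕜) *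
    Matrix.diagonal ((↑) ∘ (fun x : ℝ => Real.sqrt x) ∘ hA.1.eigenvalues) *
    (star hA.1.eigenvectorUnitary : Matrix n n 𝕜)

/-- The trace norm (Schatten 1-norm) of a complex matrix: the trace of `√(Aᴴ A)`. -/
noncomputable def traceNorm {n : Type*} [Fintype n] [DecidableEq n]
    (A : Matrix n n ℂ) : ℝ :=
  ((Matrix.posSemidef_conjTranspose_mul_self A).sqrt.trace).re

open Classical in
/-- Square root of a positive semidefinite matrix (junk value `0` otherwise). -/
noncomputable def matSqrt {n : Type*} [Fintype n] [DecidableEq n]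
    (A : Matrix n n ℂ) : Matrix n n ℂ :=
  if h : A.PosSemidef then h.sqrt else 0

/-- The fidelity `F(ρ,σ) = ‖√ρ √σ‖₁` between two density matrices. -/
noncomputable def fidelity {n : Type*} [Fintype n] [DecidableEq n]
    (ρ σ : Matrix n n ℂ) : ℝ :=
  traceNorm (matSqrt ρ * matSqrt σ)

section PortAux
open scoped MatrixOrder

lemma Matrix.PosSemidef.sqrt_eq_cfc {n : Type*} [Fintype n] [DecidableEq n]
    {A : Matrix n n ℂ} (hA : A.PosSemidef) : hA.sqrt = CFC.sqrt A := by
  rw [CFC.sqrt_eq_cfc, cfc_nnreal_eq_real _ A, hA.1.cfc_eq]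
  have hf : (RCLike.ofReal ∘ (fun x : ℝ => ((NNReal.sqrt x.toNNReal : NNReal) : ℝ)) ∘
      hA.1.eigenvalues : n → ℂ) = RCLike.ofReal ∘ (fun x : ℝ => Real.sqrt x) ∘ hA.1.eigenvalues := by
    funext i
    simp [hA.eigenvalues_nonneg i]
  simp only [Matrix.IsHermitian.cfc, Matrix.PosSemidef.sqrt, Unitary.conjStarAlgAut_apply, hf]

lemma Matrix.PosSemidef.posSemidef_sqrt {n : Type*} [Fintype n] [DecidableEq n]
    {A : Matrix n n ℂ} (hA : A.PosSemidef) : hA.sqrt.PosSemidef := by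
  rw [hA.sqrt_eq_cfc]
  exact Matrix.nonneg_iff_posSemidef.mp (CFC.sqrt_nonneg A)

lemma Matrix.PosSemidef.sqrt_mul_self {n : Type*} [Fintype n] [DecidableEq n]
    {A : Matrix n n ℂ} (hA : A.PosSemidef) : hA.sqrt * hA.sqrt = A := by
  rw [hA.sqrt_eq_cfc]
  exact CFC.sqrt_mul_sqrt_self A hA.nonneg

lemma Matrix.PosSemidef.eq_sqrt_of_sq_eq {n : Type*} [Fintype n] [DecidableEq n]
    {A B : Matrix n n ℂ} (hA : A.PosSemidef) (hB : B.PosSemidef) (h : A ^ 2 = B) :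
    A = hB.sqrt := by
  rw [hB.sqrt_eq_cfc]
  exact (CFC.sqrt_unique (by rw [← h, pow_two]) hA.nonneg).symm

end PortAux

section Aux
open Matrix
variable {d : Type*} [Fintype d] [DecidableEq d]

set_option linter.unusedSectionVars false

lemma trace_hermitize (X Y : Matrix d d ℂ) :
    ((Xᴴ * Y).trace) = ∑ p : d × d, (starRingEnd ℂ) (X p.2 p.1) * Y p.2 p.1 := by
  rw [Matrix.trace, Fintype.sum_prod_type]
  refine Finset.sum_congr rfl fun i _ => ?_
  simp [Matrix.mul_apply, Matrix.diag, conjTranspose_apply]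

lemma trace_conjTranspose_mul_self_re (X : Matrix d d ℂ) :
    ((Xᴴ * X).trace).re = ∑ p : d × d, ‖X p.2 p.1‖ ^ 2 := by
  rw [trace_hermitize, Complex.re_sum]
  refine Finset.sum_congr rfl fun p _ => ?_
  rw [Complex.conj_mul']
  norm_cast

lemma trace_conjTranspose_mul_self_re_nonneg (X : Matrix d d ℂ) :
    0 ≤ ((Xᴴ * X).trace).re := by
  rw [trace_conjTranspose_mul_self_re]
  positivity

lemma retrace_CS (X Y : Matrix d d ℂ) :
    ((Xᴴ * Y).trace).re ≤
      Real.sqrt (((Xᴴ * X).trace).re) * Real.sqrt (((Yᴴ * Y).trace).re) := by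
  rw [trace_hermitize, Complex.re_sum, trace_conjTranspose_mul_self_re,
    trace_conjTranspose_mul_self_re]
  calc ∑ p : d × d, ((starRingEnd ℂ) (X p.2 p.1) * Y p.2 p.1).re
      ≤ ∑ p : d × d, ‖X p.2 p.1‖ * ‖Y p.2 p.1‖ := by
        refine Finset.sum_le_sum fun p _ => ?_
        calc ((starRingEnd ℂ) (X p.2 p.1) * Y p.2 p.1).re
            ≤ ‖(starRingEnd ℂ) (X p.2 p.1) * Y p.2 p.1‖ := Complex.re_le_norm _
          _ = ‖X p.2 p.1‖ * ‖Y p.2 p.1‖ := by simp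
    _ ≤ _ := Real.sum_mul_le_sqrt_mul_sqrt _ _ _

lemma conj_mul_conj (V : Matrix d d ℂ) (hVsV : star V * V = 1) (D E : Matrix d d ℂ) :
    (V * D * star V) * (V * E * star V) = V * (D * E) * star V := by
  simp only [Matrix.mul_assoc]
  congr 1
  congr 1
  rw [← Matrix.mul_assoc, hVsV, one_mul]

lemma trace_conj (V : Matrix d d ℂ) (hVsV : star V * V = 1) (X : Matrix d d ℂ) :
    (V * X * star V).trace = X.trace := by
  rw [Matrix.trace_mul_cycle, hVsV, one_mul]

lemma hermitian_sign_exists (H : Matrix d d ℂ) (hH : H.IsHermitian) :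
    ∃ W ∈ Matrix.unitaryGroup d ℂ, traceNorm H = ((H * W).trace).re := by
  set V : Matrix d d ℂ := (hH.eigenvectorUnitary : Matrix d d ℂ) with hV
  have hVsV : star V * V = 1 := (Unitary.mem_iff.mp hH.eigenvectorUnitary.2).1
  set lam := hH.eigenvalues with hlam
  set g : d → ℂ := fun i => if lam i < 0 then -1 else 1 with hg
  set W : Matrix d d ℂ := V * diagonal g * star V with hW
  have hWmem : W ∈ Matrix.unitaryGroup d ℂ := by
    rw [Matrix.mem_unitaryGroup_iff']
    have hsW : star W = V * diagonal (star g) * star V := by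
      simp [hW, star_eq_conjTranspose, conjTranspose_mul, diagonal_conjTranspose,
        Matrix.mul_assoc]
    rw [hsW, hW, conj_mul_conj V hVsV, diagonal_mul_diagonal]
    have : (fun i => star g i * g i) = fun _ => (1 : ℂ) := by
      funext i; by_cases h : lam i < 0 <;> simp [hg, h]
    rw [this, diagonal_one, Matrix.mul_one]
    exact (Unitary.mem_iff.mp hH.eigenvectorUnitary.2).2
  refine ⟨W, hWmem, ?_⟩
  have hspec : H = V * diagonal (RCLike.ofReal ∘ lam) * star V := hH.spectral_theorem
  set S : Matrix d d ℂ := V * diagonal (fun i => ((|lam i| : ℝ) : ℂ)) * star V with hS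
  have hSpsd : S.PosSemidef := by
    have hd : (diagonal (fun i => ((|lam i| : ℝ) : ℂ))).PosSemidef := by
      rw [Matrix.posSemidef_diagonal_iff]
      intro i
      exact_mod_cast abs_nonneg (lam i)
    simpa [hS, star_eq_conjTranspose] using hd.mul_mul_conjTranspose_same V
  have hSsq : S ^ 2 = Hᴴ * H := by
    rw [hH.eq]
    conv_rhs => rw [hspec]
    rw [hS, pow_two, conj_mul_conj V hVsV, conj_mul_conj V hVsV,
      diagonal_mul_diagonal, diagonal_mul_diagonal]
    have hfun : (fun i => ((|lam i| : ℝ) : ℂ) * ((|lam i| : ℝ) : ℂ))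
        = fun i => (RCLike.ofReal ∘ lam) i * (RCLike.ofReal ∘ lam) i := by
      funext i
      simp only [Function.comp_apply]
      norm_cast
      exact congrArg (fun t : ℝ => (t : ℂ)) (abs_mul_abs_self (lam i))
    rw [hfun]
  have hSeq : S = (Matrix.posSemidef_conjTranspose_mul_self H).sqrt :=
    hSpsd.eq_sqrt_of_sq_eq (Matrix.posSemidef_conjTranspose_mul_self H) hSsq
  have htr : traceNorm H = ∑ i, |lam i| := by
    rw [traceNorm, ← hSeq, hS, trace_conj V hVsV, Matrix.trace_diagonal]
    rw [Complex.re_sum]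
    norm_num
  have htr2 : ((H * W).trace).re = ∑ i, |lam i| := by
    have : H * W = V * (diagonal (RCLike.ofReal ∘ lam) * diagonal g) * star V := by
      conv_lhs => rw [hspec, hW]
      rw [conj_mul_conj V hVsV]
    rw [this, diagonal_mul_diagonal, trace_conj V hVsV, Matrix.trace_diagonal,
      Complex.re_sum]
    refine Finset.sum_congr rfl fun i _ => ?_
    by_cases h : lam i < 0
    · simp [hg, h, abs_of_neg h]
    · simp [hg, h, abs_of_nonneg (not_lt.mp h)]
  rw [htr, htr2]

lemma polar_exists (M : Matrix d d ℂ) :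
    ∃ U ∈ Matrix.unitaryGroup d ℂ,
      M = U * (Matrix.posSemidef_conjTranspose_mul_self M).sqrt := by
  set h := Matrix.posSemidef_conjTranspose_mul_self M with hh
  set hH : (Mᴴ * M).IsHermitian := h.1 with hhH
  set V : Matrix d d ℂ := (hH.eigenvectorUnitary : Matrix d d ℂ) with hV
  have hVsV : star V * V = 1 := (Unitary.mem_iff.mp hH.eigenvectorUnitary.2).1
  have hVVs : V * star V = 1 := (Unitary.mem_iff.mp hH.eigenvectorUnitary.2).2
  set lam := hH.eigenvalues with hlam
  have hlam0 : ∀ i, 0 ≤ lam i := fun i => h.eigenvalues_nonneg i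
  have hP : h.sqrt = V * diagonal (RCLike.ofReal ∘ Real.sqrt ∘ lam) * star V := rfl
  set m : d → EuclideanSpace ℂ d := fun i => WithLp.toLp 2 (fun j => (M * V) j i) with hm
  have hinner : ∀ i j, (inner ℂ (m i) (m j) : ℂ) = if i = j then (lam i : ℂ) else 0 := by
    intro i j
    have h1 : (inner ℂ (m i) (m j) : ℂ) = ((M * V)ᴴ * (M * V)) i j := by
      rw [Matrix.mul_apply]
      rw [PiLp.inner_apply]
      refine Finset.sum_congr rfl fun k _ => ?_
      simp [hm, conjTranspose_apply, RCLike.inner_apply, mul_comm]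
    have h2 : (M * V)ᴴ * (M * V) = diagonal (RCLike.ofReal ∘ lam) := by
      rw [conjTranspose_mul]
      calc Vᴴ * Mᴴ * (M * V) = star V * (Mᴴ * M) * V := by
            rw [star_eq_conjTranspose]; noncomm_ring
        _ = _ := by
          have hs : Mᴴ * M = V * diagonal (RCLike.ofReal ∘ lam) * star V := hH.spectral_theorem
          rw [hs]; simp only [Matrix.mul_assoc]
          rw [hVsV, Matrix.mul_one, ← Matrix.mul_assoc, hVsV, Matrix.one_mul]
    rw [h1, h2, diagonal_apply]
    split <;> simp
  set s : Set d := {i | lam i ≠ 0} with hs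
  set f : d → EuclideanSpace ℂ d :=
    fun i => (((Real.sqrt (lam i))⁻¹ : ℝ) : ℂ) • m i with hf
  have hon : Orthonormal ℂ (s.restrict f) := by
    rw [orthonormal_iff_ite]
    intro i j
    have : (inner ℂ (f i.1) (f j.1) : ℂ) = (((Real.sqrt (lam i.1))⁻¹ : ℝ) : ℂ)
        * (((Real.sqrt (lam j.1))⁻¹ : ℝ) : ℂ) * (if i.1 = j.1 then (lam i.1 : ℂ) else 0) := by
      rw [hf]
      rw [inner_smul_left, inner_smul_right, hinner, Complex.conj_ofReal]
      ring
    change inner ℂ (f i.1) (f j.1) = _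
    rw [this]
    by_cases hij : i = j
    · subst hij
      have hpos : 0 < lam i.1 := lt_of_le_of_ne (hlam0 i.1) (Ne.symm i.2)
      rw [if_pos rfl, if_pos rfl]
      rw [← Complex.ofReal_mul, ← Complex.ofReal_mul, ← Complex.ofReal_one]
      congr 1
      have hsne : Real.sqrt (lam i.1) ≠ 0 := Real.sqrt_ne_zero'.mpr hpos
      rw [← Real.sqrt_mul_self (le_of_lt hpos)]
      field_simp
      rw [Real.sq_sqrt (Real.sqrt_nonneg _)]
    · have hij' : i.1 ≠ j.1 := fun hc => hij (Subtype.ext hc)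
      rw [if_neg hij', if_neg hij]
      ring
  obtain ⟨b, hb⟩ := hon.exists_orthonormalBasis_extension_of_card_eq
    (finrank_euclideanSpace (𝕜 := ℂ) (ι := d))
  set U' : Matrix d d ℂ := (EuclideanSpace.basisFun d ℂ).toBasis.toMatrix ⇑b with hU'
  have hU'mem : U' ∈ Matrix.unitaryGroup d ℂ :=
    (EuclideanSpace.basisFun d ℂ).toMatrix_orthonormalBasis_mem_unitary b
  have hU'app : ∀ i j, U' i j = b j i := fun i j => rfl
  have hMV : M * V = U' * diagonal (RCLike.ofReal ∘ Real.sqrt ∘ lam) := by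
    ext j i
    rw [Matrix.mul_diagonal]
    by_cases hi : lam i = 0
    · have hmi : m i = 0 := by
        have := hinner i i
        rw [if_pos rfl, hi] at this
        exact inner_self_eq_zero.mp (by rw [this]; simp)
      have : (M * V) j i = m i j := rfl
      rw [this, hmi]
      simp [hi]
    · have hbi : b i = f i := hb i hi
      have hsq : (Real.sqrt (lam i) : ℂ) ≠ 0 := by
        simp only [ne_eq, Complex.ofReal_eq_zero]
        exact Real.sqrt_ne_zero'.mpr (lt_of_le_of_ne (hlam0 i) (Ne.symm hi))
      rw [hU'app, hbi]
      have hfij : f i j = (((Real.sqrt (lam i))⁻¹ : ℝ) : ℂ) * (M * V) j i := by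
        simp only [hf, PiLp.smul_apply, smul_eq_mul]
        try rfl
      rw [hfij, Complex.ofReal_inv]
      field_simp
      rfl
  refine ⟨U' * star V, ?_, ?_⟩
  · exact mul_mem hU'mem (Unitary.star_mem hH.eigenvectorUnitary.2)
  · rw [hP]
    calc M = (M * V) * star V := by rw [Matrix.mul_assoc, hVVs, Matrix.mul_one]
      _ = U' * diagonal (RCLike.ofReal ∘ Real.sqrt ∘ lam) * star V := by rw [hMV]
      _ = U' * star V * (V * diagonal (RCLike.ofReal ∘ Real.sqrt ∘ lam) * star V) := by
          simp only [Matrix.mul_assoc]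
          rw [← Matrix.mul_assoc (star V) V, hVsV, one_mul]

end Aux

open Matrix in
/-- Fuchs–van de Graaf upper bound: `‖ρ − σ‖₁ ≤ 2√(1 − F(ρ,σ)²)` for density matrices. -/
theorem stmt10 {d : Type*} [Fintype d] [DecidableEq d]
    (ρ σ : Matrix d d ℂ)
    (hρ : ρ.PosSemidef) (hρ1 : ρ.trace = 1)
    (hσ : σ.PosSemidef) (hσ1 : σ.trace = 1) :
    traceNorm (ρ - σ) ≤ 2 * Real.sqrt (1 - fidelity ρ σ ^ 2) := by
  classical
  set A : Matrix d d ℂ := hρ.sqrt with hA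
  set C : Matrix d d ℂ := hσ.sqrt with hC
  have hAH : Aᴴ = A := hρ.posSemidef_sqrt.1
  have hCH : Cᴴ = C := hσ.posSemidef_sqrt.1
  have hAA : A * A = ρ := hρ.sqrt_mul_self
  have hCC : C * C = σ := hσ.sqrt_mul_self
  set M : Matrix d d ℂ := A * C with hM
  set P : Matrix d d ℂ := (Matrix.posSemidef_conjTranspose_mul_self M).sqrt with hPdef
  have hFid : fidelity ρ σ = (P.trace).re := by
    have hms : matSqrt ρ * matSqrt σ = M := by
      rw [matSqrt, matSqrt, dif_pos hρ, dif_pos hσ]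
    rw [fidelity, hms, traceNorm]
  set F : ℝ := (P.trace).re with hFdef
  obtain ⟨U, hUmem, hUP⟩ := polar_exists M
  have hUsU : star U * U = 1 := (Unitary.mem_iff.mp hUmem).1
  have hUUs : U * star U = 1 := (Unitary.mem_iff.mp hUmem).2
  set B : Matrix d d ℂ := C * star U with hB
  have hBH : Bᴴ = U * C := by
    rw [hB, conjTranspose_mul, hCH, star_eq_conjTranspose, conjTranspose_conjTranspose]
  -- trace identities
  have hAB_tr : (Aᴴ * B).trace = P.trace := by
    have : Aᴴ * B = U * P * star U := by
      rw [hAH, hB, ← Matrix.mul_assoc, ← hM, hUP]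
    rw [this, Matrix.trace_mul_cycle, hUsU, one_mul]
  have hBA_tr : (Bᴴ * A).trace = star P.trace := by
    have h1 : (Aᴴ * B)ᴴ = Bᴴ * A := by
      rw [conjTranspose_mul, conjTranspose_conjTranspose]
    rw [← h1, Matrix.trace_conjTranspose, hAB_tr]
  have hAA_tr : (Aᴴ * A).trace = 1 := by rw [hAH, hAA, hρ1]
  have hBB_tr : (Bᴴ * B).trace = 1 := by
    have : Bᴴ * B = U * σ * star U := by
      rw [hBH, hB, ← hCC]
      noncomm_ring
    rw [this, Matrix.trace_mul_cycle, hUsU, one_mul, hσ1]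
  -- a and b
  set a : ℝ := (((A - B)ᴴ * (A - B)).trace).re with ha
  set bb : ℝ := (((A + B)ᴴ * (A + B)).trace).re with hbb
  have haval : a = 2 - 2 * F := by
    have hexp : (A - B)ᴴ * (A - B) = Aᴴ * A - Aᴴ * B - Bᴴ * A + Bᴴ * B := by
      rw [conjTranspose_sub]; noncomm_ring
    rw [ha, hexp, Matrix.trace_add, Matrix.trace_sub, Matrix.trace_sub,
      hAA_tr, hBB_tr, hAB_tr, hBA_tr]
    simp [Complex.add_re, Complex.sub_re, hFdef]
    ring
  have hbval : bb = 2 + 2 * F := by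
    have hexp : (A + B)ᴴ * (A + B) = Aᴴ * A + Aᴴ * B + Bᴴ * A + Bᴴ * B := by
      rw [conjTranspose_add]; noncomm_ring
    rw [hbb, hexp, Matrix.trace_add, Matrix.trace_add, Matrix.trace_add,
      hAA_tr, hBB_tr, hAB_tr, hBA_tr]
    simp [Complex.add_re, hFdef]
    ring
  have hanneg : 0 ≤ a := trace_conjTranspose_mul_self_re_nonneg _
  have hbnneg : 0 ≤ bb := trace_conjTranspose_mul_self_re_nonneg _
  -- the sign unitary
  obtain ⟨W, hWmem, hWtr⟩ := hermitian_sign_exists (ρ - σ) (hρ.1.sub hσ.1)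
  have hWsW : star W * W = 1 := (Unitary.mem_iff.mp hWmem).1
  have hWWs : W * star W = 1 := (Unitary.mem_iff.mp hWmem).2
  -- decomposition of ρ - σ
  have hAAH : A * Aᴴ = ρ := by rw [hAH, hAA]
  have hBBH : B * Bᴴ = σ := by
    rw [hB, hBH, ← hCC]
    calc C * star U * (U * C) = C * (star U * U) * C := by noncomm_ring
      _ = C * C := by rw [hUsU, Matrix.mul_one]
  have hsum : ((A - B) * (A + B)ᴴ * W).trace + ((A + B) * (A - B)ᴴ * W).trace
      = ((ρ - σ) * W).trace + ((ρ - σ) * W).trace := by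
    rw [← Matrix.trace_add, ← Matrix.trace_add]
    congr 1
    rw [← hAAH, ← hBBH, conjTranspose_add, conjTranspose_sub]
    noncomm_ring
  -- bound each term
  have hinv : ∀ X : Matrix d d ℂ, (star W * X)ᴴ * (star W * X) = Xᴴ * X := by
    intro X
    have h1 : (star W * X)ᴴ = Xᴴ * W := by
      rw [conjTranspose_mul, star_eq_conjTranspose, conjTranspose_conjTranspose]
    rw [h1]
    have hWWs' : W * Wᴴ = 1 := by rw [← star_eq_conjTranspose]; exact hWWs
    calc Xᴴ * W * (Wᴴ * X) = Xᴴ * (W * Wᴴ) * X := by noncomm_ring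
      _ = Xᴴ * X := by rw [hWWs', Matrix.mul_one]
  have hterm : ∀ X Y : Matrix d d ℂ, ((X * Yᴴ * W).trace).re ≤
      Real.sqrt (((Yᴴ * Y).trace).re) * Real.sqrt (((Xᴴ * X).trace).re) := by
    intro X Y
    have hcyc : (X * Yᴴ * W).trace = ((star W * Y)ᴴ * X).trace := by
      have h1 : (star W * Y)ᴴ = Yᴴ * W := by
        rw [conjTranspose_mul, star_eq_conjTranspose, conjTranspose_conjTranspose]
      rw [h1, ← Matrix.trace_mul_cycle]
    rw [hcyc]
    calc ((star W * Y)ᴴ * X).trace.re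
        ≤ Real.sqrt ((((star W * Y)ᴴ * (star W * Y)).trace).re) *
          Real.sqrt (((Xᴴ * X).trace).re) := retrace_CS _ _
      _ = _ := by rw [hinv]
  -- put it together
  have hmain : traceNorm (ρ - σ) ≤ Real.sqrt a * Real.sqrt bb := by
    have h1 := hterm (A - B) (A + B)
    have h2 := hterm (A + B) (A - B)
    have hre : (((ρ - σ) * W).trace).re + (((ρ - σ) * W).trace).re
        = (((A - B) * (A + B)ᴴ * W).trace).re + (((A + B) * (A - B)ᴴ * W).trace).re := by
      have := congrArg Complex.re hsum
      simp only [Complex.add_re] at this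
      linarith
    rw [hWtr]
    have : Real.sqrt bb * Real.sqrt a = Real.sqrt a * Real.sqrt bb := by ring
    nlinarith [Real.sqrt_nonneg a, Real.sqrt_nonneg bb]
  have hab : a * bb = 4 * (1 - F ^ 2) := by rw [haval, hbval]; ring
  calc traceNorm (ρ - σ) ≤ Real.sqrt a * Real.sqrt bb := hmain
    _ = Real.sqrt (a * bb) := (Real.sqrt_mul hanneg _).symm
    _ = Real.sqrt (4 * (1 - F ^ 2)) := by rw [hab]
    _ = 2 * Real.sqrt (1 - F ^ 2) := by
        rw [Real.sqrt_mul (by norm_num : (0:ℝ) ≤ 4)]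
        norm_num [show Real.sqrt 4 = 2 by
          rw [show (4:ℝ) = 2 ^ 2 by norm_num, Real.sqrt_sq (by norm_num : (0:ℝ) ≤ 2)]]
    _ = 2 * Real.sqrt (1 - fidelity ρ σ ^ 2) := by rw [hFid]
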